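/- Let H be a real symmetric N_g × N_g matrix with orthonormal eigenvectors ψ_1, …, ψ_{N_g} and eigenvalues ε_1 ≤ … ≤ ε_{N_g}, let 1 ≤ N_e < N_g with gap ε_{N_e+1} − ε_{N_e} > 0, set Q = I − Σ_{i=1}^{N_e} ψ_i ψ_iᵀ, and let χ₀ = 2 Σ_{i=1}^{N_e} Σ_{j=N_e+1}^{N_g} (ε_i − ε_j)^{-1} (ψ_i ⊙ ψ_j)(ψ_i ⊙ ψ_j)ᵀ. Let g_1, …, g_m ∈ ℝ^{N_g}, let r_1, …, r_{N_μ} be indices in {1, …, N_g}, and let ξ_1, …, ξ_{N_μ} ∈ ℝ^{N_g} be interpolation vectors such that the interpolative decomposition ψ_i ⊙ g_j = Σ_{μ=1}^{N_μ} ξ_μ ψ_i(r_μ) g_j(r_μ) holds exactly for all 1 ≤ i ≤ N_e and 1 ≤ j ≤ m. For each i and μ, let ζ_{iμ} be the unique element of the range of Q solving Q(ε_i I − H)Q ζ_{iμ} = Q ξ_μ, and define W_μ = 2 Σ_{i=1}^{N_e} (ψ_i ⊙ ζ_{iμ}) ψ_i(r_μ). Then χ₀ g_j = Σ_{μ=1}^{N_μ}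 W_μ g_j(r_μ) for every 1 ≤ j ≤ m. -/

import Mathlib

open Matrix

private lemma sum_mulVec' {n : ℕ} {ι : Type*} (s : Finset ι)
    (f : ι → Matrix (Fin n) (Fin n) ℝ) (x : Fin n → ℝ) :
    (∑ i ∈ s, f i) *ᵥ x = ∑ i ∈ s, f i *ᵥ x := by
  ext a
  rw [Finset.sum_apply]
  simp only [Matrix.mulVec, dotProduct, Matrix.sum_apply, Finset.sum_mul]
  exact Finset.sum_comm

private lemma mulVec_sum' {n : ℕ} {ι : Type*} (s : Finset ι)
    (M : Matrix (Fin n) (Fin n) ℝ) (f : ι → Fin n → ℝ) :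
    M *ᵥ (∑ i ∈ s, f i) = ∑ i ∈ s, M *ᵥ f i := by
  ext a
  rw [Finset.sum_apply]
  simp only [Matrix.mulVec, dotProduct, Finset.sum_apply, Finset.mul_sum]
  exact Finset.sum_comm

private lemma vmv_mulVec {n : ℕ} (u v x : Fin n → ℝ) :
    vecMulVec u v *ᵥ x = (v ⬝ᵥ x) • u := by
  ext a
  simp only [Matrix.mulVec, Matrix.vecMulVec_apply, dotProduct, Pi.smul_apply,
    smul_eq_mul, Finset.sum_mul]
  exact Finset.sum_congr rfl fun b _ => by ring

private lemma dotProduct_sum' {n : ℕ} {ι : Type*} (s : Finset ι)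
    (v : Fin n → ℝ) (f : ι → Fin n → ℝ) :
    v ⬝ᵥ (∑ i ∈ s, f i) = ∑ i ∈ s, v ⬝ᵥ f i := by
  simp only [dotProduct, Finset.sum_apply, Finset.mul_sum]
  exact Finset.sum_comm

/-- If the interpolative decomposition ψ_i ⊙ g_j = Σ_μ ξ_μ ψ_i(r_μ) g_j(r_μ)
holds exactly, and ζ_{iμ} ∈ range Q solves Q(ε_i I − H)Q ζ_{iμ} = Q ξ_μ, then with
W_μ = 2 Σ_i (ψ_i ⊙ ζ_{iμ}) ψ_i(r_μ) one has χ₀ g_j = Σ_μ W_μ g_j(r_μ) for all j. -/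
theorem stmt8 (Ng Ne : ℕ) (hNe : 1 ≤ Ne) (hlt : Ne < Ng)
    (H : Matrix (Fin Ng) (Fin Ng) ℝ) (hH : H.IsSymm)
    (ψ : Fin Ng → Fin Ng → ℝ) (ε : Fin Ng → ℝ)
    (horth : ∀ i j : Fin Ng, ψ i ⬝ᵥ ψ j = if i = j then (1 : ℝ) else 0)
    (heig : ∀ i : Fin Ng, H *ᵥ ψ i = ε i • ψ i)
    (hmono : Monotone ε)
    (hgap : ε ⟨Ne - 1, by omega⟩ < ε ⟨Ne, hlt⟩)
    (Q : Matrix (Fin Ng) (Fin Ng) ℝ)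
    (hQ : Q = 1 - ∑ i ∈ Finset.univ.filter (fun i : Fin Ng => (i : ℕ) < Ne),
      vecMulVec (ψ i) (ψ i))
    (χ₀ : Matrix (Fin Ng) (Fin Ng) ℝ)
    (hχ₀ : χ₀ = (2 : ℝ) • ∑ i ∈ Finset.univ.filter (fun i : Fin Ng => (i : ℕ) < Ne),
      ∑ j ∈ Finset.univ.filter (fun j : Fin Ng => Ne ≤ (j : ℕ)),
        (ε i - ε j)⁻¹ • vecMulVec (ψ i * ψ j) (ψ i * ψ j))
    (m Nμ : ℕ) (g : Fin m → Fin Ng → ℝ)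
    (r : Fin Nμ → Fin Ng) (ξ : Fin Nμ → Fin Ng → ℝ)
    (hID : ∀ i : Fin Ng, (i : ℕ) < Ne → ∀ j : Fin m,
      ψ i * g j = ∑ μ : Fin Nμ, (ψ i (r μ) * g j (r μ)) • ξ μ)
    (ζ : Fin Ng → Fin Nμ → Fin Ng → ℝ)
    (hrange : ∀ i : Fin Ng, (i : ℕ) < Ne → ∀ μ : Fin Nμ, ∃ w, ζ i μ = Q *ᵥ w)
    (hsol : ∀ i : Fin Ng, (i : ℕ) < Ne → ∀ μ : Fin Nμ,
      (Q * (ε i • (1 : Matrix (Fin Ng) (Fin Ng) ℝ) - H) * Q) *ᵥ ζ i μ = Q *ᵥ ξ μ)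
    (W : Fin Nμ → Fin Ng → ℝ)
    (hW : ∀ μ : Fin Nμ, W μ = (2 : ℝ) •
      ∑ i ∈ Finset.univ.filter (fun i : Fin Ng => (i : ℕ) < Ne),
        ψ i (r μ) • (ψ i * ζ i μ)) :
    ∀ j : Fin m, χ₀ *ᵥ g j = ∑ μ : Fin Nμ, g j (r μ) • W μ := by
  intro j
  classical
  set F : Finset (Fin Ng) := Finset.univ.filter (fun i : Fin Ng => (i : ℕ) < Ne) with hF
  set G : Finset (Fin Ng) := Finset.univ.filter (fun k : Fin Ng => Ne ≤ (k : ℕ)) with hG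
  -- completeness
  have hone : ∑ k : Fin Ng, vecMulVec (ψ k) (ψ k) = (1 : Matrix (Fin Ng) (Fin Ng) ℝ) := by
    have h1 : (Matrix.of ψ) * (Matrix.of ψ)ᵀ = 1 := by
      ext a b
      simpa [Matrix.mul_apply, dotProduct, Matrix.one_apply] using horth a b
    have h2 : (Matrix.of ψ)ᵀ * (Matrix.of ψ) = 1 := mul_eq_one_comm.mp h1
    ext a b
    have := congrFun (congrFun h2 a) b
    simpa [Matrix.mul_apply, Matrix.vecMulVec_apply, Matrix.sum_apply] using this
  have hexp : ∀ v : Fin Ng → ℝ, v = ∑ k : Fin Ng, (ψ k ⬝ᵥ v) • ψ k := by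
    intro v
    have := congrArg (fun M => M *ᵥ v) hone
    simp only [sum_mulVec', vmv_mulVec, Matrix.one_mulVec] at this
    exact this.symm
  -- Q on eigenvectors
  have hQψ : ∀ k : Fin Ng, Q *ᵥ ψ k = if (k : ℕ) < Ne then 0 else ψ k := by
    intro k
    rw [hQ, Matrix.sub_mulVec, Matrix.one_mulVec, sum_mulVec']
    simp only [vmv_mulVec, horth, ite_smul, one_smul, zero_smul]
    rw [Finset.sum_ite_eq' F k ψ]
    by_cases hk : (k : ℕ) < Ne
    · have : k ∈ F := by simp [hF, hk]
      simp [this, hk]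
    · have : k ∉ F := by simp [hF, hk]
      simp [this, hk]
  have hGmem : ∀ k : Fin Ng, k ∈ G ↔ Ne ≤ (k : ℕ) := by
    intro k; simp [hG]
  -- Q action
  have hQv : ∀ v : Fin Ng → ℝ, Q *ᵥ v = ∑ k ∈ G, (ψ k ⬝ᵥ v) • ψ k := by
    intro v
    conv_lhs => rw [hexp v]
    rw [mulVec_sum']
    simp only [Matrix.mulVec_smul, hQψ, smul_ite, smul_zero]
    rw [Finset.sum_ite, Finset.sum_const_zero, zero_add]
    apply Finset.sum_congr
    · ext k; simp [hG, not_lt]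
    · intros; rfl
  have hQfix : ∀ k ∈ G, Q *ᵥ ψ k = ψ k := by
    intro k hk
    rw [hQψ, if_neg]
    exact not_lt.mpr ((hGmem k).mp hk)
  have hQζ : ∀ i : Fin Ng, (i : ℕ) < Ne → ∀ μ : Fin Nμ, Q *ᵥ ζ i μ = ζ i μ := by
    intro i hi μ
    obtain ⟨w, hw⟩ := hrange i hi μ
    rw [hw, hQv w, mulVec_sum']
    refine Finset.sum_congr rfl fun k hk => ?_
    rw [Matrix.mulVec_smul, hQfix k hk]
  -- coefficient extraction
  have hcoeff : ∀ (s : Finset (Fin Ng)) (a : Fin Ng → ℝ) (k : Fin Ng), k ∈ s →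
      ψ k ⬝ᵥ (∑ k' ∈ s, a k' • ψ k') = a k := by
    intro s a k hk
    rw [dotProduct_sum']
    simp only [dotProduct_smul, horth, smul_eq_mul, mul_ite, mul_one, mul_zero]
    rw [Finset.sum_ite_eq s k a]
    simp [hk]
  -- key: explicit formula for ζ
  have hζ : ∀ i : Fin Ng, (hi : (i : ℕ) < Ne) → ∀ μ : Fin Nμ,
      ζ i μ = ∑ k ∈ G, ((ε i - ε k)⁻¹ * (ψ k ⬝ᵥ ξ μ)) • ψ k := by
    intro i hi μ
    have hζexp : ζ i μ = ∑ k ∈ G, (ψ k ⬝ᵥ ζ i μ) • ψ k := by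
      conv_lhs => rw [← hQζ i hi μ, hQv]
    have hs := hsol i hi μ
    rw [← Matrix.mulVec_mulVec, ← Matrix.mulVec_mulVec, hQζ i hi μ] at hs
    have hmid : (ε i • (1 : Matrix (Fin Ng) (Fin Ng) ℝ) - H) *ᵥ ζ i μ
        = ∑ k' ∈ G, ((ψ k' ⬝ᵥ ζ i μ) * (ε i - ε k')) • ψ k' := by
      conv_lhs => rw [hζexp]
      rw [mulVec_sum']
      refine Finset.sum_congr rfl fun k' _ => ?_
      rw [Matrix.mulVec_smul, Matrix.sub_mulVec, Matrix.smul_mulVec,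
        Matrix.one_mulVec, heig, ← sub_smul, smul_smul]
    rw [hmid, mulVec_sum'] at hs
    have hs2 : ∑ k' ∈ G, ((ψ k' ⬝ᵥ ζ i μ) * (ε i - ε k')) • ψ k'
        = ∑ k ∈ G, (ψ k ⬝ᵥ ξ μ) • ψ k := by
      rw [← hQv (ξ μ), ← hs]
      refine Finset.sum_congr rfl fun k' hk' => ?_
      rw [Matrix.mulVec_smul, hQfix k' hk']
    rw [hζexp]
    refine Finset.sum_congr rfl fun k hk => ?_
    have hkNe : Ne ≤ (k : ℕ) := (hGmem k).mp hk
    have hne : ε i - ε k ≠ 0 := by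
      have h1 : ε i ≤ ε ⟨Ne - 1, by omega⟩ := hmono (by
        simp only [Fin.le_def]; omega)
      have h2 : ε ⟨Ne, hlt⟩ ≤ ε k := hmono (by
        simp only [Fin.le_def]; omega)
      have : ε i < ε k := lt_of_le_of_lt h1 (lt_of_lt_of_le hgap h2)
      linarith
    have hck := congrArg (fun v => ψ k ⬝ᵥ v) hs2
    rw [hcoeff G _ k hk, hcoeff G _ k hk] at hck
    -- hck : (ψ k ⬝ᵥ ζ i μ) * (ε i - ε k) = ψ k ⬝ᵥ ξ μ
    congr 1
    rw [← hck]
    field_simp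
  -- dot product via ID
  have hdotμ : ∀ i : Fin Ng, (i : ℕ) < Ne → ∀ k : Fin Ng,
      (ψ i * ψ k) ⬝ᵥ g j = ∑ μ : Fin Nμ, (ψ i (r μ) * g j (r μ)) * (ψ k ⬝ᵥ ξ μ) := by
    intro i hi k
    have h1 : (ψ i * ψ k) ⬝ᵥ g j = ψ k ⬝ᵥ (ψ i * g j) := by
      simp only [dotProduct, Pi.mul_apply]
      exact Finset.sum_congr rfl fun y _ => by ring
    rw [h1, hID i hi j, dotProduct_sum']
    refine Finset.sum_congr rfl fun μ _ => ?_
    rw [dotProduct_smul, smul_eq_mul]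
  -- both sides equal the canonical triple sum
  have hL : χ₀ *ᵥ g j = ∑ i ∈ F, ∑ k ∈ G, ∑ μ : Fin Nμ,
      (2 * (ψ i (r μ) * g j (r μ)) * ((ε i - ε k)⁻¹ * (ψ k ⬝ᵥ ξ μ))) • (ψ i * ψ k) := by
    rw [hχ₀, Matrix.smul_mulVec, sum_mulVec', Finset.smul_sum]
    refine Finset.sum_congr rfl fun i hi => ?_
    have hiNe : (i : ℕ) < Ne := by simpa [hF] using hi
    rw [sum_mulVec', Finset.smul_sum]
    refine Finset.sum_congr rfl fun k hk => ?_
    rw [Matrix.smul_mulVec, vmv_mulVec, hdotμ i hiNe k, Finset.sum_smul,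
      Finset.smul_sum, Finset.smul_sum]
    refine Finset.sum_congr rfl fun μ _ => ?_
    simp only [smul_smul]
    congr 1
    ring
  have hR : ∑ μ : Fin Nμ, g j (r μ) • W μ = ∑ μ : Fin Nμ, ∑ i ∈ F, ∑ k ∈ G,
      (2 * (ψ i (r μ) * g j (r μ)) * ((ε i - ε k)⁻¹ * (ψ k ⬝ᵥ ξ μ))) • (ψ i * ψ k) := by
    refine Finset.sum_congr rfl fun μ _ => ?_
    rw [hW μ, smul_smul, Finset.smul_sum]
    refine Finset.sum_congr rfl fun i hi => ?_
    have hiNe : (i : ℕ) < Ne := by simpa [hF] using hi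
    rw [hζ i hiNe μ, Finset.mul_sum, Finset.smul_sum, Finset.smul_sum]
    refine Finset.sum_congr rfl fun k hk => ?_
    simp only [mul_smul_comm, smul_smul]
    congr 1
    ring
  rw [hL, hR]
  rw [show (∑ i ∈ F, ∑ k ∈ G, ∑ μ : Fin Nμ,
      (2 * (ψ i (r μ) * g j (r μ)) * ((ε i - ε k)⁻¹ * (ψ k ⬝ᵥ ξ μ))) • (ψ i * ψ k))
      = ∑ i ∈ F, ∑ μ : Fin Nμ, ∑ k ∈ G,
      (2 * (ψ i (r μ) * g j (r μ)) * ((ε i - ε k)⁻¹ * (ψ k ⬝ᵥ ξ μ))) • (ψ i * ψ k)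
      from Finset.sum_congr rfl fun i _ => Finset.sum_comm]
  exact Finset.sum_comm
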